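/- (Theorem 4.4, simple exclusion, open-closed network, detailed balance) Fix N ∈ ℕ. Suppose the symmetry conditions hold: β_{kl}(n_k,n_l;y) = β_{lk}(n_l+1,n_k−1;y) for k ≠ l, y_k = y_l = 0, n_k ≥ 1; θ_{jk}(n_j,n_k;y) = θ_{kj}(n_k+1,n_j−1;y) for y_j = 1, y_k = 0, n_j ≥ 1; ε_{ij}(n_i,n_j;y)·γ_i(n_i−1) = γ_j(n_j)·ε_{ji}(n_j+1,n_i−1;y) for i ≠ j, y_i = y_j = 1, n_i ≥ 1; and (4.11) τ_{jj'}(n;y)·ξ_j/η_j = τ_{j'j}(n;y+e^{j→j'})·ξ_{j'}/η_{j'} for y_j = 1, y_{j'} = 0. Then on {(y,n) : |n| = N} the weight w(y,n) = ∏_{q∈Λ} [ξ_q γ̄_q(n_q)/η_q]^{y_q} satisfies the detailed balance equations: (i) w(y,n)·β_{kl}(n_k,n_l;y) = w(y, n+e^{k→l})·β_{lk}(n_l+1,n_k−1;y) for y_k = y_l = 0, k ≠ l, n_k ≥ 1; (ii) w(y,n)·ε_{ij}(n_i,n_j;y) = w(y, n+e^{i→j})·ε_{ji}(n_j+1,n_i−1;y)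 for y_i = y_j = 1, i ≠ j, n_i ≥ 1; (iii) w(y,n)·θ_{jk}(n_j,n_k;y) = w(y, n+e^{j→k})·θ_{kj}(n_k+1,n_j−1;y)·γ_j(n_j−1) for y_j = 1, y_k = 0, n_j ≥ 1; (iv) w(y,n)·θ_{kj}(n_k,n_j;y)·γ_j(n_j) = w(y, n+e^{k→j})·θ_{jk}(n_j+1,n_k−1;y) for y_j = 1, y_k = 0, n_k ≥ 1; (v) w(y,n)·γ̄_j(n_j)^{−1}·τ_{jj'}(n;y) = w(y+e^{j→j'}, n)·γ̄_{j'}(n_{j'})^{−1}·τ_{j'j}(n;y+e^{j→j'}) for y_j = 1, y_{j'} = 0; (vi) w(y,n)·ξ_k γ̄_k(n_k) = w(y+e^k, n)·η_k whenever y_k = 0. -/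

import Mathlib

/-- The `e^k` configuration increment: `n + e^k`. -/
def bump {Λ : Type*} [DecidableEq Λ] (n : Λ → ℕ) (k : Λ) : Λ → ℕ :=
  fun l => n l + (if l = k then 1 else 0)

/-- The jump move `n + e^{i→k} = n - e^i + e^k`. -/
def move {Λ : Type*} [DecidableEq Λ] (n : Λ → ℕ) (i k : Λ) : Λ → ℕ :=
  fun l => n l - (if l = i then 1 else 0) + (if l = k then 1 else 0)

lemma prodSplit2 {Λ : Type*} [Fintype Λ] [DecidableEq Λ] {i k : Λ} (h : i ≠ k) (f : Λ → ℝ) :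
    ∏ q, f q = f i * f k * ∏ q ∈ Finset.univ \ {i, k}, f q := by
  rw [← Finset.prod_sdiff (Finset.subset_univ ({i, k} : Finset Λ)), Finset.prod_pair h]
  ring

/-- Theorem 4.4, simple exclusion, open-closed network, detailed
balance: under the symmetry conditions and (4.11), on `{(y,n) : |n| = N}` the
weights `w(y,n) = ∏_q [ξ_q γ̄_q(n_q)/η_q]^{y_q}` satisfy detailed balance.
Occupation configurations `y : Λ → {0,1}` are encoded as `y : Λ → ℕ` with
`∀ s, y s ≤ 1`. -/
theorem exclusion_open_closed_detailed_balance
    (Λ : Type*) [Fintype Λ] [DecidableEq Λ] [Nonempty Λ] (N : ℕ)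
    (gam : Λ → ℕ → ℝ)
    (hgam : ∀ p m, 0 < gam p m) (hgam0 : ∀ p, gam p 0 = 1)
    (gamBar : Λ → ℕ → ℝ)
    (hgamBar : ∀ p m, gamBar p m = ∏ u ∈ Finset.range m, gam p u)
    (β θ ε : Λ → Λ → ℕ → ℕ → (Λ → ℕ) → ℝ) (τ : Λ → Λ → (Λ → ℕ) → (Λ → ℕ) → ℝ)
    (hβnn : ∀ k l a b y, 0 ≤ β k l a b y) (hθnn : ∀ j k a b y, 0 ≤ θ j k a b y)
    (hεnn : ∀ i j a b y, 0 ≤ ε i j a b y) (hτnn : ∀ j j' n y, 0 ≤ τ j j' n y)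
    (ξ η : Λ → ℝ) (hξ : ∀ k, 0 < ξ k) (hη : ∀ k, 0 < η k)
    -- symmetry conditions
    (hβ : ∀ (y : Λ → ℕ), (∀ s, y s ≤ 1) → ∀ (k l : Λ) (a b : ℕ),
      k ≠ l → y k = 0 → y l = 0 → 1 ≤ a →
      β k l a b y = β l k (b + 1) (a - 1) y)
    (hθ : ∀ (y : Λ → ℕ), (∀ s, y s ≤ 1) → ∀ (j k : Λ) (a b : ℕ),
      y j = 1 → y k = 0 → 1 ≤ a →
      θ j k a b y = θ k j (b + 1) (a - 1) y)
    (hε : ∀ (y : Λ → ℕ), (∀ s, y s ≤ 1) → ∀ (i j : Λ) (a b : ℕ),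
      i ≠ j → y i = 1 → y j = 1 → 1 ≤ a →
      ε i j a b y * gam i (a - 1) = gam j b * ε j i (b + 1) (a - 1) y)
    -- (4.11)
    (h411 : ∀ (y : Λ → ℕ), (∀ s, y s ≤ 1) → ∀ (j j' : Λ) (n : Λ → ℕ),
      y j = 1 → y j' = 0 →
      τ j j' n y * ξ j / η j = τ j' j n (move y j j') * ξ j' / η j')
    (w : (Λ → ℕ) → (Λ → ℕ) → ℝ)
    (hw : ∀ (y n : Λ → ℕ), w y n =
      ∏ q, (ξ q * gamBar q (n q) / η q) ^ (y q)) :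
    ∀ (y : Λ → ℕ), (∀ s, y s ≤ 1) → ∀ n : Λ → ℕ, ∑ s, n s = N →
      -- (i) task jump between unloaded sites
      (∀ k l, y k = 0 → y l = 0 → k ≠ l → 1 ≤ n k →
        w y n * β k l (n k) (n l) y =
          w y (move n k l) * β l k (n l + 1) (n k - 1) y) ∧
      -- (ii) task jump between loaded sites
      (∀ i j, y i = 1 → y j = 1 → i ≠ j → 1 ≤ n i →
        w y n * ε i j (n i) (n j) y =
          w y (move n i j) * ε j i (n j + 1) (n i - 1) y) ∧
      -- (iii) task jump from a loaded to an unloaded site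
      (∀ j k, y j = 1 → y k = 0 → 1 ≤ n j →
        w y n * θ j k (n j) (n k) y =
          w y (move n j k) * (θ k j (n k + 1) (n j - 1) y * gam j (n j - 1))) ∧
      -- (iv) task jump from an unloaded to a loaded site
      (∀ j k, y j = 1 → y k = 0 → 1 ≤ n k →
        w y n * (θ k j (n k) (n j) y * gam j (n j)) =
          w y (move n k j) * θ j k (n j + 1) (n k - 1) y) ∧
      -- (v) leap of a distinguished customer
      (∀ j j', y j = 1 → y j' = 0 →
        w y n * (gamBar j (n j))⁻¹ * τ j j' n y =
          w (move y j j') n * (gamBar j' (n j'))⁻¹ * τ j' j n (move y j j')) ∧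
      -- (vi) arrival of a distinguished customer paired with its exit
      (∀ k, y k = 0 →
        w y n * (ξ k * gamBar k (n k)) = w (bump y k) n * η k) := by
  intro y hy n _
  have hgb : ∀ p m, 0 < gamBar p m := by
    intro p m; rw [hgamBar]; exact Finset.prod_pos fun u _ => hgam p u
  have hgbs : ∀ p m, gamBar p (m + 1) = gamBar p m * gam p m := by
    intro p m; rw [hgamBar, hgamBar, Finset.prod_range_succ]
  refine ⟨?_, ?_, ?_, ?_, ?_, ?_⟩
  · -- (i)
    intro k l hk hl hkl hnk
    have hwm : w y (move n k l) = w y n := by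
      rw [hw, hw, prodSplit2 hkl, prodSplit2 hkl]
      have hmk : move n k l k = n k - 1 := by simp [move, hkl]
      have hml : move n k l l = n l + 1 := by simp [move, Ne.symm hkl]
      rw [hmk, hml, hk, hl]
      simp only [pow_zero, one_mul, mul_one]
      refine Finset.prod_congr rfl fun q hq => ?_
      simp only [Finset.mem_sdiff, Finset.mem_insert, Finset.mem_singleton] at hq
      push_neg at hq
      have : move n k l q = n q := by simp [move, hq.2.1, hq.2.2]
      rw [this]
    rw [hwm, hβ y hy k l (n k) (n l) hkl hk hl hnk]
  · -- (ii)
    intro i j hi hj hij hni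
    have key : gamBar i (n i) = gamBar i (n i - 1) * gam i (n i - 1) := by
      have h := hgbs i (n i - 1)
      rwa [Nat.sub_add_cancel hni] at h
    rw [hw, hw, prodSplit2 hij, prodSplit2 hij]
    have hmi : move n i j i = n i - 1 := by simp [move, hij]
    have hmj : move n i j j = n j + 1 := by simp [move, Ne.symm hij]
    rw [hmi, hmj, hi, hj]
    have htail : (∏ q ∈ Finset.univ \ {i, j},
        (ξ q * gamBar q (move n i j q) / η q) ^ (y q)) =
        ∏ q ∈ Finset.univ \ {i, j}, (ξ q * gamBar q (n q) / η q) ^ (y q) := by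
      refine Finset.prod_congr rfl fun q hq => ?_
      simp only [Finset.mem_sdiff, Finset.mem_insert, Finset.mem_singleton] at hq
      push_neg at hq
      have : move n i j q = n q := by simp [move, hq.2.1, hq.2.2]
      rw [this]
    rw [htail, key, hgbs j (n j)]
    have hε' := hε y hy i j (n i) (n j) hij hi hj hni
    simp only [pow_one]
    set T := ∏ q ∈ Finset.univ \ {i, j}, (ξ q * gamBar q (n q) / η q) ^ (y q) with hT
    linear_combination
      (ξ i * ξ j * gamBar i (n i - 1) * gamBar j (n j) / η i / η j * T) * hε'
  · -- (iii)
    intro j k hj hk hnj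
    have hjk : j ≠ k := by intro h; rw [h, hk] at hj; exact absurd hj (by norm_num)
    have key : gamBar j (n j) = gamBar j (n j - 1) * gam j (n j - 1) := by
      have h := hgbs j (n j - 1)
      rwa [Nat.sub_add_cancel hnj] at h
    rw [hw, hw, prodSplit2 hjk, prodSplit2 hjk]
    have hmj : move n j k j = n j - 1 := by simp [move, hjk]
    have hmk : move n j k k = n k + 1 := by simp [move, Ne.symm hjk]
    rw [hmj, hmk, hj, hk]
    have htail : (∏ q ∈ Finset.univ \ {j, k},
        (ξ q * gamBar q (move n j k q) / η q) ^ (y q)) =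
        ∏ q ∈ Finset.univ \ {j, k}, (ξ q * gamBar q (n q) / η q) ^ (y q) := by
      refine Finset.prod_congr rfl fun q hq => ?_
      simp only [Finset.mem_sdiff, Finset.mem_insert, Finset.mem_singleton] at hq
      push_neg at hq
      have : move n j k q = n q := by simp [move, hq.2.1, hq.2.2]
      rw [this]
    rw [htail, key, hθ y hy j k (n j) (n k) hj hk hnj]
    ring
  · -- (iv)
    intro j k hj hk hnk
    have hjk : j ≠ k := by intro h; rw [h, hk] at hj; exact absurd hj (by norm_num)
    rw [hw, hw, prodSplit2 hjk, prodSplit2 hjk]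
    have hmj : move n k j j = n j + 1 := by simp [move, hjk]
    have hmk : move n k j k = n k - 1 := by simp [move, Ne.symm hjk]
    rw [hmj, hmk, hj, hk]
    have htail : (∏ q ∈ Finset.univ \ {j, k},
        (ξ q * gamBar q (move n k j q) / η q) ^ (y q)) =
        ∏ q ∈ Finset.univ \ {j, k}, (ξ q * gamBar q (n q) / η q) ^ (y q) := by
      refine Finset.prod_congr rfl fun q hq => ?_
      simp only [Finset.mem_sdiff, Finset.mem_insert, Finset.mem_singleton] at hq
      push_neg at hq
      have : move n k j q = n q := by simp [move, hq.2.2, hq.2.1]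
      rw [this]
    have hθ' := hθ y hy j k (n j + 1) (n k - 1) hj hk (by omega)
    rw [Nat.sub_add_cancel hnk, Nat.add_sub_cancel] at hθ'
    rw [htail, hgbs j (n j), hθ']
    ring
  · -- (v)
    intro j j' hj hj'
    have hjj : j ≠ j' := by intro h; rw [h, hj'] at hj; exact absurd hj (by norm_num)
    rw [hw, hw, prodSplit2 hjj, prodSplit2 hjj]
    have hmj : move y j j' j = 0 := by simp [move, hjj, hj]
    have hmj' : move y j j' j' = 1 := by simp [move, Ne.symm hjj, hj']
    rw [hmj, hmj', hj, hj']
    have htail : (∏ q ∈ Finset.univ \ {j, j'},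
        (ξ q * gamBar q (n q) / η q) ^ (move y j j' q)) =
        ∏ q ∈ Finset.univ \ {j, j'}, (ξ q * gamBar q (n q) / η q) ^ (y q) := by
      refine Finset.prod_congr rfl fun q hq => ?_
      simp only [Finset.mem_sdiff, Finset.mem_insert, Finset.mem_singleton] at hq
      push_neg at hq
      have : move y j j' q = y q := by simp [move, hq.2.1, hq.2.2]
      rw [this]
    rw [htail]
    have h4 := h411 y hy j j' n hj hj'
    simp only [pow_zero, pow_one, one_mul, mul_one]
    set T := ∏ q ∈ Finset.univ \ {j, j'}, (ξ q * gamBar q (n q) / η q) ^ (y q) with hT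
    have hbj : (gamBar j (n j)) ≠ 0 := (hgb j (n j)).ne'
    have hbj' : (gamBar j' (n j')) ≠ 0 := (hgb j' (n j')).ne'
    field_simp [hbj, hbj', (hη j).ne', (hη j').ne'] at h4 ⊢
    linear_combination T * h4
  · -- (vi)
    intro k hk
    rw [hw, hw, ← Finset.mul_prod_erase _ _ (Finset.mem_univ k),
      ← Finset.mul_prod_erase _ _ (Finset.mem_univ k)]
    have hbk : bump y k k = 1 := by simp [bump, hk]
    rw [hbk, hk]
    have htail : (∏ q ∈ Finset.univ.erase k,
        (ξ q * gamBar q (n q) / η q) ^ (bump y k q)) =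
        ∏ q ∈ Finset.univ.erase k, (ξ q * gamBar q (n q) / η q) ^ (y q) := by
      refine Finset.prod_congr rfl fun q hq => ?_
      have : bump y k q = y q := by simp [bump, Finset.ne_of_mem_erase hq]
      rw [this]
    rw [htail]
    simp only [pow_zero, pow_one, one_mul]
    have hk0 : (η k) ≠ 0 := (hη k).ne'
    set P := ∏ q ∈ Finset.univ.erase k, (ξ q * gamBar q (n q) / η q) ^ (y q) with hP
    field_simp
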